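/- arXiv:1312.7677 — 2 statements merged into one kernel-verified Lean document; each statement's English description precedes it below -/
import Mathlib

section
/- The Bott-type involution associated with a self-adjoint operator: let H be a complex Hilbert space and T a bounded self-adjoint operator on H. Define R : H ⊕ H → H ⊕ H by R(ξ, η) := ((1 + T²)^{-1}(T²ξ + Tη), (1 + T²)^{-1}(Tξ + η)), and set F := 2R − 1. Then R is an orthogonal projection (R* = R and R² = R), and consequently F is a self-adjoint involution: F* = F and F² = 1. -/
noncomputable section

/-- The Bott-type involution associated with a self-adjoint operator: let
`H` be a complex Hilbert space and `T` a bounded self-adjoint operator on `H`. With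
`S := (1 + T²)⁻¹` (which exists since `T² ≥ 0`), define `R : H ⊕ H → H ⊕ H` by
`R(ξ, η) := (S(T²ξ + Tη), S(Tξ + η))` and set `F := 2R − 1`. Then `R` is an orthogonal
projection (`R* = R`, `R² = R`, self-adjointness expressed via the direct-sum inner ℂ product
`⟪(ξ₁,ξ₂),(η₁,η₂)⟫ = ⟪ξ₁,η₁⟫ + ⟪ξ₂,η₂⟫`), and consequently `F` is a self-adjoint
involution: `F* = F` and `F² = 1`. -/
theorem statement14 {H : Type*} [NormedAddCommGroup H] [InnerProductSpace ℂ H]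
    [CompleteSpace H] (T : H →L[ℂ] H) (hT : IsSelfAdjoint T) :
    let S : H →L[ℂ] H := Ring.inverse (1 + T * T)
    let R : H × H → H × H := fun p => (S (T (T p.1) + T p.2), S (T p.1 + p.2))
    let F : H × H → H × H := fun p => (2 : ℂ) • R p - p
    (∀ p q : H × H,
        (inner ℂ ((R p).1) q.1 : ℂ) + inner ℂ ((R p).2) q.2
          = inner ℂ p.1 ((R q).1) + inner ℂ p.2 ((R q).2)) ∧
    (∀ p : H × H, R (R p) = R p) ∧
    (∀ p q : H × H,
        (inner ℂ ((F p).1) q.1 : ℂ) + inner ℂ ((F p).2) q.2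
          = inner ℂ p.1 ((F q).1) + inner ℂ p.2 ((F q).2)) ∧
    (∀ p : H × H, F (F p) = p) := by
  intro S R F
  have hpos : (0:H →L[ℂ] H) ≤ T * T := by
    simpa [hT.star_eq] using star_mul_self_nonneg T
  have hU : IsUnit (1 + T * T) := by
    exact CStarAlgebra.isUnit_of_le 1
      (by simpa using add_le_add_left hpos 1) isStrictlyPositive_one
  have hS1 : S * (1 + T * T) = 1 := Ring.inverse_mul_cancel _ hU
  have hS2 : (1 + T * T) * S = 1 := Ring.mul_inverse_cancel _ hU
  have hc : T * (1 + T * T) = (1 + T * T) * T := by noncomm_ring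
  have hcomm : T * S = S * T := by
    have h : S * (T * (1 + T * T)) * S = S * ((1 + T * T) * T) * S := by rw [hc]
    calc T * S = S * ((1 + T * T) * T) * S := by
          rw [← mul_assoc S (1 + T * T) T, hS1, one_mul]
      _ = S * (T * (1 + T * T)) * S := h.symm
      _ = S * T := by
          rw [← mul_assoc S T (1 + T * T), mul_assoc (S * T) (1 + T * T) S, hS2, mul_one]
  have hTS : ∀ x, T (S x) = S (T x) := fun x => by
    have := congrArg (fun f : H →L[ℂ] H => f x) hcomm
    simpa using this
  have h1 : ∀ x, S (x + T (T x)) = x := fun x => by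
    have := congrArg (fun f : H →L[ℂ] H => f x) hS1
    simpa [mul_comm, add_comm] using this
  have hu : star (1 + T * T) = 1 + T * T := by
    simp [star_add, star_mul, hT.star_eq]
  have hSsa : IsSelfAdjoint S := by
    have : star S = S := by
      conv_lhs => rw [← Ring.inverse_star, hu]
    exact this
  have hTsym := hT.isSymmetric
  have hSsym := hSsa.isSymmetric
  have hSi : ∀ x y : H, (inner ℂ (S x) y : ℂ) = inner ℂ x (S y) := fun x y => hSsym x y
  have hTi : ∀ x y : H, (inner ℂ (T x) y : ℂ) = inner ℂ x (T y) := fun x y => hTsym x y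
  have hST : ∀ x y : H, (inner ℂ (S (T x)) y : ℂ) = inner ℂ x (S (T y)) := fun x y => by
    rw [hSi, ← hTS, hTi]
  have hST2 : ∀ x y : H, (inner ℂ (S (T (T x))) y : ℂ) = inner ℂ x (S (T (T y))) := fun x y => by
    rw [hSi, ← hTS, ← hTS, hTi, hTi]
  have hRsa : ∀ p q : H × H,
      (inner ℂ ((R p).1) q.1 : ℂ) + inner ℂ ((R p).2) q.2
        = inner ℂ p.1 ((R q).1) + inner ℂ p.2 ((R q).2) := by
    intro p q
    show (inner ℂ (S (T (T p.1) + T p.2)) q.1 : ℂ) + inner ℂ (S (T p.1 + p.2)) q.2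
        = inner ℂ p.1 (S (T (T q.1) + T q.2)) + inner ℂ p.2 (S (T q.1 + q.2))
    simp only [map_add, inner_add_left, inner_add_right, hST2, hST, hSi]
    ring
  have hRidem : ∀ p : H × H, R (R p) = R p := by
    intro p
    show (S (T (T (S (T (T p.1) + T p.2))) + T (S (T p.1 + p.2))),
          S (T (S (T (T p.1) + T p.2)) + S (T p.1 + p.2)))
        = (S (T (T p.1) + T p.2), S (T p.1 + p.2))
    set a := T (T p.1) + T p.2 with ha
    set b := T p.1 + p.2 with hb
    have hTb : T b = a := by simp [ha, hb, map_add]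
    have hTTb : T (T b) = T a := by rw [hTb]
    refine Prod.ext ?_ ?_
    · show S (T (T (S a)) + T (S b)) = S a
      rw [hTS, hTS b, hTS, ← map_add S, hTb]
      congr 1
      rw [add_comm, h1]
    · show S (T (S a) + S b) = S b
      rw [hTS, ← map_add S, ← hTTb]
      congr 1
      rw [add_comm, h1]
  refine ⟨hRsa, hRidem, ?_, ?_⟩
  · intro p q
    have key2 : (inner ℂ (S (T (T p.1) + T p.2)) q.1 : ℂ) + inner ℂ (S (T p.1 + p.2)) q.2
        = inner ℂ p.1 (S (T (T q.1) + T q.2)) + inner ℂ p.2 (S (T q.1 + q.2)) := hRsa p q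
    show (inner ℂ ((2:ℂ) • S (T (T p.1) + T p.2) - p.1) q.1 : ℂ)
          + inner ℂ ((2:ℂ) • S (T p.1 + p.2) - p.2) q.2
        = inner ℂ p.1 ((2:ℂ) • S (T (T q.1) + T q.2) - q.1)
          + inner ℂ p.2 ((2:ℂ) • S (T q.1 + q.2) - q.2)
    simp only [inner_sub_left, inner_sub_right, inner_smul_left, inner_smul_right,
      map_ofNat]
    linear_combination 2 * key2
  · intro p
    have e1 : S (T (T (R p).1) + T ((R p).2)) = (R p).1 := congrArg Prod.fst (hRidem p)
    have e2 : S (T ((R p).1) + (R p).2) = (R p).2 := congrArg Prod.snd (hRidem p)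
    have key : R ((2:ℂ) • R p - p) = R p := by
      show (S (T (T (((2:ℂ) • R p - p).1)) + T (((2:ℂ) • R p - p).2)),
            S (T (((2:ℂ) • R p - p).1) + ((2:ℂ) • R p - p).2)) = R p
      have hf : ((2:ℂ) • R p - p).1 = (2:ℂ) • (R p).1 - p.1 := rfl
      have hs : ((2:ℂ) • R p - p).2 = (2:ℂ) • (R p).2 - p.2 := rfl
      rw [hf, hs]
      have harg1 : T (T ((2:ℂ) • (R p).1 - p.1)) + T ((2:ℂ) • (R p).2 - p.2)
          = (2:ℂ) • (T (T (R p).1) + T ((R p).2)) - (T (T p.1) + T p.2) := by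
        simp only [map_sub, map_smul, smul_add]; abel
      have harg2 : T ((2:ℂ) • (R p).1 - p.1) + ((2:ℂ) • (R p).2 - p.2)
          = (2:ℂ) • (T ((R p).1) + (R p).2) - (T p.1 + p.2) := by
        simp only [map_sub, map_smul, smul_add]; abel
      rw [harg1, harg2, map_sub, map_sub, map_smul, map_smul, e1, e2]
      have hx : ∀ x : H, (2:ℂ) • x - x = x := fun x => by
        rw [two_smul, add_sub_cancel_right]
      show ((2:ℂ) • (R p).1 - (R p).1, (2:ℂ) • (R p).2 - (R p).2) = R p
      exact Prod.ext (hx _) (hx _)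
    show (2:ℂ) • R ((2:ℂ) • R p - p) - ((2:ℂ) • R p - p) = p
    rw [key]
    exact sub_sub_cancel _ _
end
end

section
/- Commutator estimate for the square root of a strictly positive operator: for all real numbers 0 < ε ≤ R there exists a constant C > 0 such that for every complex Hilbert space H, every self-adjoint bounded operator S on H with ε·1 ≤ S ≤ R·1, and every bounded operator a on H, ‖[S^{1/2}, a]‖ ≤ C·‖[S, a]‖, where S^{1/2} denotes the positive square root of S given by the continuous functional calculus and [A, B] := AB − BA. -/
noncomputable section

universe u

namespace Statement15Aux

/-- Damped Heron iteration converging to `Real.sqrt` on `[ε, R]`. -/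
def heron (R : ℝ) : ℕ → ℝ → ℝ
  | 0, _ => 0
  | n + 1, x => heron R n x + (x - (heron R n x) ^ 2) / (2 * Real.sqrt R)

lemma heron_continuous (R : ℝ) (n : ℕ) : Continuous (heron R n) := by
  induction n with
  | zero => simpa [heron] using continuous_const
  | succ n ih => exact (ih.add (((continuous_id.sub (ih.pow 2)).div_const _)))

variable {ε R x : ℝ}

lemma sqrtR_pos (hε : 0 < ε) (hεR : ε ≤ R) : 0 < Real.sqrt R :=
  Real.sqrt_pos.mpr (hε.trans_le hεR)

lemma heron_mem (hε : 0 < ε) (hεR : ε ≤ R) (hx : x ∈ Set.Icc ε R) (n : ℕ) :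
    0 ≤ heron R n x ∧ heron R n x ≤ Real.sqrt x := by
  obtain ⟨hx1, hx2⟩ := hx
  have hx0 : 0 < x := hε.trans_le hx1
  have hR : 0 < Real.sqrt R := sqrtR_pos hε hεR
  have hsx : 0 < Real.sqrt x := Real.sqrt_pos.mpr hx0
  induction n with
  | zero => exact ⟨le_rfl, hsx.le⟩
  | succ n ih =>
    obtain ⟨h0, h1⟩ := ih
    have hsq : heron R n x ^ 2 ≤ x := by
      calc heron R n x ^ 2 ≤ Real.sqrt x ^ 2 := by
            exact pow_le_pow_left₀ h0 h1 2
        _ = x := Real.sq_sqrt hx0.le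
    have hnum : 0 ≤ x - heron R n x ^ 2 := by linarith
    constructor
    · have := div_nonneg hnum (by positivity : (0:ℝ) ≤ 2 * Real.sqrt R)
      simp only [heron]; linarith
    · have key : Real.sqrt x - heron R (n+1) x
          = (Real.sqrt x - heron R n x) * (1 - (Real.sqrt x + heron R n x) / (2 * Real.sqrt R)) := by
        simp only [heron]
        field_simp
        ring_nf
        nlinarith [Real.sq_sqrt hx0.le]
      have h2 : Real.sqrt x + heron R n x ≤ 2 * Real.sqrt R := by
        have : Real.sqrt x ≤ Real.sqrt R := Real.sqrt_le_sqrt hx2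
        linarith
      have : 0 ≤ (Real.sqrt x - heron R n x) * (1 - (Real.sqrt x + heron R n x) / (2 * Real.sqrt R)) := by
        apply mul_nonneg (by linarith)
        rw [sub_nonneg, div_le_one (by positivity)]
        exact h2
      linarith [key ▸ this]

lemma heron_err (hε : 0 < ε) (hεR : ε ≤ R) (hx : x ∈ Set.Icc ε R) (n : ℕ) :
    Real.sqrt x - heron R n x ≤ Real.sqrt R * (1 - Real.sqrt ε / (2 * Real.sqrt R)) ^ n := by
  obtain ⟨hx1, hx2⟩ := hx
  have hx0 : 0 < x := hε.trans_le hx1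
  have hR : 0 < Real.sqrt R := sqrtR_pos hε hεR
  set κ := 1 - Real.sqrt ε / (2 * Real.sqrt R) with hκ
  have hκ0 : 0 ≤ κ := by
    have : Real.sqrt ε ≤ Real.sqrt R := Real.sqrt_le_sqrt hεR
    rw [hκ, sub_nonneg, div_le_one (by positivity)]
    linarith
  induction n with
  | zero =>
    simpa [heron] using Real.sqrt_le_sqrt hx2
  | succ n ih =>
    obtain ⟨h0, h1⟩ := heron_mem hε hεR ⟨hx1, hx2⟩ n
    have key : Real.sqrt x - heron R (n+1) x
        = (Real.sqrt x - heron R n x) * (1 - (Real.sqrt x + heron R n x) / (2 * Real.sqrt R)) := by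
      simp only [heron]
      field_simp
      nlinarith [Real.sq_sqrt hx0.le]
    have hfac : 1 - (Real.sqrt x + heron R n x) / (2 * Real.sqrt R) ≤ κ := by
      rw [hκ]
      have : Real.sqrt ε ≤ Real.sqrt x := Real.sqrt_le_sqrt hx1
      gcongr
      linarith
    have hfac0 : 0 ≤ 1 - (Real.sqrt x + heron R n x) / (2 * Real.sqrt R) := by
      rw [sub_nonneg, div_le_one (by positivity)]
      have : Real.sqrt x ≤ Real.sqrt R := Real.sqrt_le_sqrt hx2
      linarith
    calc Real.sqrt x - heron R (n+1) x
        = (Real.sqrt x - heron R n x) * (1 - (Real.sqrt x + heron R n x) / (2 * Real.sqrt R)) := key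
      _ ≤ (Real.sqrt R * κ ^ n) * κ := by
          apply mul_le_mul ih hfac hfac0
          positivity
      _ = Real.sqrt R * κ ^ (n+1) := by ring

lemma heron_lb (hε : 0 < ε) (hεR : ε ≤ R) (hx : x ∈ Set.Icc ε R) (n : ℕ) :
    ε / (2 * Real.sqrt R) ≤ heron R (n+1) x := by
  obtain ⟨hx1, hx2⟩ := hx
  have hx0 : 0 < x := hε.trans_le hx1
  have hR : 0 < Real.sqrt R := sqrtR_pos hε hεR
  induction n with
  | zero =>
    simp only [heron]
    have : ε / (2 * Real.sqrt R) ≤ x / (2 * Real.sqrt R) := by gcongr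
    simpa [heron] using by linarith [this]
  | succ n ih =>
    obtain ⟨h0, h1⟩ := heron_mem hε hεR ⟨hx1, hx2⟩ (n+1)
    have hsq : heron R (n+1) x ^ 2 ≤ x := by
      calc heron R (n+1) x ^ 2 ≤ Real.sqrt x ^ 2 := pow_le_pow_left₀ h0 h1 2
        _ = x := Real.sq_sqrt hx0.le
    have : 0 ≤ (x - heron R (n+1) x ^ 2) / (2 * Real.sqrt R) := by
      apply div_nonneg (by linarith) (by positivity)
    simp only [heron] at ih h0 h1 hsq this ⊢
    linarith

section RingIdentities

variable {A : Type*} [Ring A] [Module ℝ A] [SMulCommClass ℝ A A] [IsScalarTower ℝ A A]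

lemma aux_comm (T S' a : A) (c : ℝ) :
    (T + c • (S' - T ^ 2)) * a - a * (T + c • (S' - T ^ 2)) =
      ((T * a - a * T) - c • (T * (T * a - a * T) + (T * a - a * T) * T))
        + c • (S' * a - a * S') := by
  simp only [add_mul, mul_add, smul_sub, smul_add, sub_mul, mul_sub, smul_mul_assoc,
    mul_smul_comm, pow_two, mul_assoc]
  abel

lemma aux_half (T X : A) (d : ℝ) :
    X - (2⁻¹ * d) • (T * X + X * T)
      = (2:ℝ)⁻¹ • (((1:A) - d • T) * X + X * ((1:A) - d • T)) := by
  simp only [sub_mul, mul_sub, one_mul, mul_one, smul_add, smul_sub, smul_mul_assoc,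
    mul_smul_comm, smul_smul]
  module

end RingIdentities

lemma spectrum_subset {H : Type u} [NormedAddCommGroup H] [InnerProductSpace ℂ H]
    [CompleteSpace H] (S : H →L[ℂ] H) (hS : IsSelfAdjoint S) {ε R : ℝ}
    (h1 : ∀ ξ : H, ε * ‖ξ‖ ^ 2 ≤ (inner ℂ (S ξ) ξ : ℂ).re)
    (h2 : ∀ ξ : H, (inner ℂ (S ξ) ξ : ℂ).re ≤ R * ‖ξ‖ ^ 2) :
    spectrum ℝ S ⊆ Set.Icc ε R := by
  have key : ∀ (c : ℝ) (x : H), ((inner ℂ ((algebraMap ℝ (H →L[ℂ] H) c) x) x : ℂ)).re = c * ‖x‖ ^ 2 := by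
    intro c x
    have : ((algebraMap ℝ (H →L[ℂ] H) c) x) = (c : ℂ) • x := by
      simp [Algebra.algebraMap_eq_smul_one, ← RCLike.real_smul_eq_coe_smul (K := ℂ)]
    rw [this, inner_smul_left, Complex.conj_ofReal, inner_self_eq_norm_sq_to_K (𝕜 := ℂ) x]
    simp [← Complex.ofReal_pow]
  have hle : algebraMap ℝ (H →L[ℂ] H) ε ≤ S := by
    rw [ContinuousLinearMap.le_def]
    refine ⟨ContinuousLinearMap.isSelfAdjoint_iff_isSymmetric.mp (hS.sub (IsSelfAdjoint.algebraMap _ (star_trivial _))), fun x => ?_⟩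
    simp only [ContinuousLinearMap.reApplyInnerSelf, ContinuousLinearMap.sub_apply,
      inner_sub_left, map_sub, RCLike.re_to_complex]
    rw [key]
    linarith [h1 x]
  have hge : S ≤ algebraMap ℝ (H →L[ℂ] H) R := by
    rw [ContinuousLinearMap.le_def]
    refine ⟨ContinuousLinearMap.isSelfAdjoint_iff_isSymmetric.mp ((IsSelfAdjoint.algebraMap _ (star_trivial _)).sub hS), fun x => ?_⟩
    simp only [ContinuousLinearMap.reApplyInnerSelf, ContinuousLinearMap.sub_apply,
      inner_sub_left, map_sub, RCLike.re_to_complex]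
    rw [key]
    linarith [h2 x]
  intro x hx
  exact ⟨(algebraMap_le_iff_le_spectrum hS).mp hle x hx,
    (le_algebraMap_iff_spectrum_le hS).mp hge x hx⟩

end Statement15Aux

open Statement15Aux in
set_option maxHeartbeats 1000000 in
/-- Commutator estimate for the square root of a strictly positive
operator: for all reals `0 < ε ≤ R` there exists `C > 0` such that for every complex
Hilbert space `H`, every bounded self-adjoint operator `S` on `H` with `ε·1 ≤ S ≤ R·1`
(meaning `ε‖ξ‖² ≤ ⟨Sξ, ξ⟩ ≤ R‖ξ‖²` for all `ξ`), and every bounded operator `a` on `H`,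
`‖[S^{1/2}, a]‖ ≤ C·‖[S, a]‖`, where `S^{1/2} = cfc Real.sqrt S` is the positive square
root of `S` given by the continuous functional calculus. -/
theorem statement15 (ε R : ℝ) (hε : 0 < ε) (hεR : ε ≤ R) :
    ∃ C : ℝ, 0 < C ∧
      ∀ (H : Type u) [NormedAddCommGroup H] [InnerProductSpace ℂ H] [CompleteSpace H]
        (S a : H →L[ℂ] H), IsSelfAdjoint S →
        (∀ ξ : H, ε * ‖ξ‖ ^ 2 ≤ (inner ℂ (S ξ) ξ : ℂ).re) →
        (∀ ξ : H, (inner ℂ (S ξ) ξ : ℂ).re ≤ R * ‖ξ‖ ^ 2) →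
        ‖cfc Real.sqrt S * a - a * cfc Real.sqrt S‖ ≤ C * ‖S * a - a * S‖ := by
  have hR : 0 < R := hε.trans_le hεR
  have hsR : 0 < Real.sqrt R := Real.sqrt_pos.mpr hR
  have hsRsq : Real.sqrt R ^ 2 = R := Real.sq_sqrt hR.le
  refine ⟨Real.sqrt R / ε, by positivity, ?_⟩
  intro H _ _ _ S a hS h1 h2
  set sR := Real.sqrt R with hsRdef
  set κ := 1 - Real.sqrt ε / (2 * sR) with hκdef
  have hκ0 : 0 ≤ κ := by
    have : Real.sqrt ε ≤ sR := Real.sqrt_le_sqrt hεR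
    rw [hκdef, sub_nonneg, div_le_one (by positivity)]
    linarith
  have hκ1 : κ < 1 := by
    have : 0 < Real.sqrt ε := Real.sqrt_pos.mpr hε
    rw [hκdef]
    have : 0 < Real.sqrt ε / (2 * sR) := by positivity
    linarith
  have hspec : spectrum ℝ S ⊆ Set.Icc ε R := spectrum_subset S hS h1 h2
  set Y := S * a - a * S with hY
  set M := sR / ε * ‖Y‖ with hM
  have hM0 : 0 ≤ M := by positivity
  -- the approximating operators
  set T : ℕ → (H →L[ℂ] H) := fun n => cfc (heron R n) S with hT
  have hcont : ∀ n, ContinuousOn (heron R n) (spectrum ℝ S) :=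
    fun n => (heron_continuous R n).continuousOn
  have hT0 : T 0 = 0 := by
    rw [hT]
    exact cfc_const_zero ℝ S
  have hTrec : ∀ n, T (n + 1) = T n + (2⁻¹ * sR⁻¹) • (S - T n ^ 2) := by
    intro n
    have hfun : heron R (n+1) = fun x => heron R n x + (2⁻¹ * sR⁻¹) * (x - heron R n x ^ 2) := by
      funext x
      simp only [heron, hsRdef]
      field_simp
    have hc2 : ContinuousOn (fun x => x - heron R n x ^ 2) (spectrum ℝ S) :=
      (continuous_id.sub ((heron_continuous R n).pow 2)).continuousOn
    have hc3 : ContinuousOn (fun x => (2⁻¹ * sR⁻¹) * (x - heron R n x ^ 2)) (spectrum ℝ S) :=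
      (continuous_const.mul (continuous_id.sub ((heron_continuous R n).pow 2))).continuousOn
    calc T (n+1) = cfc (fun x => heron R n x + (2⁻¹ * sR⁻¹) * (x - heron R n x ^ 2)) S := by
          first
          | (simp only [hT]; exact cfc_congr fun x _ => congrFun hfun x)
          | simp only [hT]
      _ = T n + (2⁻¹ * sR⁻¹) • cfc (fun x => x - heron R n x ^ 2) S := by
          rw [cfc_add (a := S) (f := fun x => heron R n x) (g := fun x => (2⁻¹ * sR⁻¹) * (x - heron R n x ^ 2)) (hf := hcont n) (hg := hc3), cfc_const_mul _ _ _ hc2]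
      _ = T n + (2⁻¹ * sR⁻¹) • (S - T n ^ 2) := by
          rw [cfc_sub (fun x => x) (fun x => heron R n x ^ 2) _ continuous_id'.continuousOn ((heron_continuous R n).pow 2).continuousOn,
            cfc_id' ℝ S hS, cfc_pow _ 2 _ (hcont n) hS]
  -- error estimate
  have herr : ∀ n, ‖cfc Real.sqrt S - T n‖ ≤ sR * κ ^ n := by
    intro n
    have : cfc Real.sqrt S - T n = cfc (fun x => Real.sqrt x - heron R n x) S := by
      simp only [hT]
      rw [cfc_sub _ _ _ Real.continuous_sqrt.continuousOn (hcont n)]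
    rw [this]
    refine norm_cfc_le (by positivity) fun x hx => ?_
    have hmem := heron_mem hε hεR (hspec hx) n
    have herr' := heron_err hε hεR (hspec hx) n
    rw [Real.norm_eq_abs, abs_of_nonneg (by linarith [hmem.2])]
    exact herr'
  -- norm bound on 1 - sR⁻¹ • T (n+1)
  have hAle : ∀ n, ‖(1 : H →L[ℂ] H) - sR⁻¹ • T (n+1)‖ ≤ 1 - ε / (2 * R) := by
    intro n
    have hrw : (1 : H →L[ℂ] H) - sR⁻¹ • T (n+1)
        = cfc (fun x => 1 - sR⁻¹ * heron R (n+1) x) S := by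
      simp only [hT]
      rw [cfc_sub (fun _ => 1) (fun x => sR⁻¹ * heron R (n+1) x) _ continuous_const.continuousOn
          (continuous_const.mul (heron_continuous R (n+1))).continuousOn,
        cfc_const_one ℝ S hS, cfc_const_mul _ _ _ (hcont (n+1))]
    rw [hrw]
    have hc0 : (0:ℝ) ≤ 1 - ε / (2 * R) := by
      have : ε / (2 * R) ≤ 1 := by
        rw [div_le_one (by positivity)]; linarith
      linarith
    refine norm_cfc_le hc0 fun x hx => ?_
    obtain ⟨hx1, hx2⟩ := hspec hx
    have hmem := heron_mem hε hεR ⟨hx1, hx2⟩ (n+1)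
    have hlb := heron_lb hε hεR ⟨hx1, hx2⟩ n
    have hub : heron R (n+1) x ≤ sR :=
      hmem.2.trans (Real.sqrt_le_sqrt hx2)
    rw [Real.norm_eq_abs, abs_le]
    constructor
    · have hle1 : sR⁻¹ * heron R (n+1) x ≤ sR⁻¹ * sR :=
        mul_le_mul_of_nonneg_left hub (by positivity)
      have : sR⁻¹ * heron R (n+1) x ≤ 1 := by
        rwa [inv_mul_cancel₀ hsR.ne'] at hle1
      have h1' : (0:ℝ) ≤ 1 - sR⁻¹ * heron R (n+1) x := by linarith
      linarith
    · have hmul := mul_le_mul_of_nonneg_left hlb (by positivity : (0:ℝ) ≤ sR⁻¹)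
      have hkey : ε / (2 * R) = sR⁻¹ * (ε / (2 * sR)) := by
        rw [← hsRsq, inv_mul_eq_div, div_div]
        ring_nf
      have : ε / (2 * R) ≤ sR⁻¹ * heron R (n+1) x := by
        rw [hkey]; exact hmul
      linarith
  -- commutator bound
  set X : ℕ → (H →L[ℂ] H) := fun n => T n * a - a * T n with hX
  have hXrec : ∀ n, X (n+1)
      = (2:ℝ)⁻¹ • (((1 : H →L[ℂ] H) - sR⁻¹ • T n) * X n + X n * ((1 : H →L[ℂ] H) - sR⁻¹ • T n))
        + (2⁻¹ * sR⁻¹) • Y := by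
    intro n
    rw [hX, hY]
    simp only
    rw [hTrec n, aux_comm, ← aux_half]
  have hXbound : ∀ n, ‖X (n+1)‖ ≤ M := by
    intro n
    induction n with
    | zero =>
      rw [hXrec 0]
      have hX0 : X 0 = 0 := by simp only [hX, hT0]; simp
      rw [hX0]
      simp only [mul_zero, zero_mul, add_zero, smul_zero, zero_add]
      rw [norm_smul, Real.norm_eq_abs, abs_of_nonneg (by positivity), hM]
      have hcle : 2⁻¹ * sR⁻¹ ≤ sR / ε := by
        rw [show (2:ℝ)⁻¹ * sR⁻¹ = 1 / (2 * sR) by ring,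
          div_le_div_iff₀ (by positivity) hε]
        nlinarith [hsRsq]
      exact mul_le_mul_of_nonneg_right hcle (norm_nonneg Y)
    | succ n ih =>
      rw [hXrec (n+1)]
      have hnorm1 : ‖(2:ℝ)⁻¹ • (((1 : H →L[ℂ] H) - sR⁻¹ • T (n+1)) * X (n+1)
          + X (n+1) * ((1 : H →L[ℂ] H) - sR⁻¹ • T (n+1)))‖
          ≤ (1 - ε / (2 * R)) * M := by
        rw [norm_smul, Real.norm_eq_abs, abs_of_nonneg (by norm_num)]
        calc (2:ℝ)⁻¹ * ‖((1 : H →L[ℂ] H) - sR⁻¹ • T (n+1)) * X (n+1)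
              + X (n+1) * ((1 : H →L[ℂ] H) - sR⁻¹ • T (n+1))‖
            ≤ (2:ℝ)⁻¹ * (‖(1 : H →L[ℂ] H) - sR⁻¹ • T (n+1)‖ * ‖X (n+1)‖
              + ‖X (n+1)‖ * ‖(1 : H →L[ℂ] H) - sR⁻¹ • T (n+1)‖) :=
              mul_le_mul_of_nonneg_left ((norm_add_le _ _).trans
                (add_le_add (norm_mul_le _ _) (norm_mul_le _ _))) (by norm_num)
          _ ≤ (2:ℝ)⁻¹ * ((1 - ε / (2 * R)) * M + M * (1 - ε / (2 * R))) := by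
              have hA := hAle n
              have hc0 : (0:ℝ) ≤ 1 - ε / (2 * R) := by
                have : ε / (2 * R) ≤ 1 := by rw [div_le_one (by positivity)]; linarith
                linarith
              have := norm_nonneg (X (n+1))
              refine mul_le_mul_of_nonneg_left (add_le_add ?_ ?_) (by norm_num)
              · exact mul_le_mul hA ih (norm_nonneg _) hc0
              · exact mul_le_mul ih hA (norm_nonneg _) hM0
          _ = (1 - ε / (2 * R)) * M := by ring
      have hnorm2 : ‖(2⁻¹ * sR⁻¹) • Y‖ = ε / (2 * R) * M := by
        rw [norm_smul, Real.norm_eq_abs, abs_of_nonneg (by positivity), hM, ← hsRsq]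
        field_simp
      calc ‖(2:ℝ)⁻¹ • (((1 : H →L[ℂ] H) - sR⁻¹ • T (n+1)) * X (n+1)
              + X (n+1) * ((1 : H →L[ℂ] H) - sR⁻¹ • T (n+1))) + (2⁻¹ * sR⁻¹) • Y‖
          ≤ (1 - ε / (2 * R)) * M + ε / (2 * R) * M := by
            refine (norm_add_le _ _).trans ?_
            rw [hnorm2]
            exact add_le_add hnorm1 le_rfl
        _ = M := by ring
  -- conclusion
  have hfinal : ∀ n : ℕ, ‖cfc Real.sqrt S * a - a * cfc Real.sqrt S‖
      ≤ M + 2 * ‖a‖ * (sR * κ ^ (n+1)) := by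
    intro n
    have hsplit : cfc Real.sqrt S * a - a * cfc Real.sqrt S
        = X (n+1) + ((cfc Real.sqrt S - T (n+1)) * a - a * (cfc Real.sqrt S - T (n+1))) := by
      simp only [hX]
      noncomm_ring
    have hD := herr (n+1)
    have hDnorm : ‖(cfc Real.sqrt S - T (n+1)) * a - a * (cfc Real.sqrt S - T (n+1))‖
        ≤ 2 * ‖a‖ * (sR * κ ^ (n+1)) := by
      refine (norm_sub_le _ _).trans ?_
      have h1' := norm_mul_le (cfc Real.sqrt S - T (n+1)) a
      have h2' := norm_mul_le a (cfc Real.sqrt S - T (n+1))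
      nlinarith [norm_nonneg a, norm_nonneg (cfc Real.sqrt S - T (n+1))]
    calc ‖cfc Real.sqrt S * a - a * cfc Real.sqrt S‖
        ≤ ‖X (n+1)‖ + ‖(cfc Real.sqrt S - T (n+1)) * a - a * (cfc Real.sqrt S - T (n+1))‖ := by
          rw [hsplit]; exact norm_add_le _ _
      _ ≤ M + 2 * ‖a‖ * (sR * κ ^ (n+1)) := add_le_add (hXbound n) hDnorm
  have htend : Filter.Tendsto (fun n : ℕ => M + 2 * ‖a‖ * (sR * κ ^ (n+1)))
      Filter.atTop (nhds M) := by
    have h0 : Filter.Tendsto (fun n : ℕ => κ ^ (n+1)) Filter.atTop (nhds 0) :=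
      (tendsto_pow_atTop_nhds_zero_of_lt_one hκ0 hκ1).comp (Filter.tendsto_add_atTop_nat 1)
    have h1' : Filter.Tendsto (fun n : ℕ => M + 2 * ‖a‖ * (sR * κ ^ (n+1)))
        Filter.atTop (nhds (M + 2 * ‖a‖ * (sR * 0))) := by
      exact Filter.Tendsto.const_add M ((Filter.Tendsto.const_mul sR h0).const_mul (2 * ‖a‖))
    simpa using h1'
  exact ge_of_tendsto' htend hfinal
end
end
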